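/- Let λ > 0, Δt > 0. Define the 2×2 matrix G with rows [0, 1] and [(2+λs)/(λs - Δt²λ - 2), (Δt²λ - 4)/(λs - Δt²λ - 2)] where s = Δt²/2. Then both eigenvalues of G are (4 - λΔt² ± 4iΔt√λ)/(4 + λΔt²) and have modulus exactly 1. -/

import Mathlib

open Matrix Complex

/-- eigenvalues of the P¹-DG time-stepping matrix with s = Δt²/2. -/
theorem stmt_0 (lam Δt : ℝ) (hlam : 0 < lam) (hΔt : 0 < Δt)
    (s : ℝ) (hs : s = Δt ^ 2 / 2)
    (G : Matrix (Fin 2) (Fin 2) ℂ)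
    (hG : G = !![0, 1;
      (((2 + lam * s) / (lam * s - Δt ^ 2 * lam - 2) : ℝ) : ℂ),
      (((Δt ^ 2 * lam - 4) / (lam * s - Δt ^ 2 * lam - 2) : ℝ) : ℂ)])
    (μp μm : ℂ)
    (hμp : μp = (4 - lam * Δt ^ 2 + 4 * I * Δt * Real.sqrt lam) / (4 + lam * Δt ^ 2))
    (hμm : μm = (4 - lam * Δt ^ 2 - 4 * I * Δt * Real.sqrt lam) / (4 + lam * Δt ^ 2)) :
    (G - μp • (1 : Matrix (Fin 2) (Fin 2) ℂ)).det = 0 ∧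
    (G - μm • (1 : Matrix (Fin 2) (Fin 2) ℂ)).det = 0 ∧
    (∀ μ : ℂ, (G - μ • (1 : Matrix (Fin 2) (Fin 2) ℂ)).det = 0 → μ = μp ∨ μ = μm) ∧
    ‖μp‖ = 1 ∧ ‖μm‖ = 1 := by
  have hsq : Real.sqrt lam ^ 2 = lam := Real.sq_sqrt hlam.le
  have hsqC : ((Real.sqrt lam : ℝ) : ℂ) ^ 2 = (lam : ℂ) := by exact_mod_cast congrArg Complex.ofReal hsq
  have hdenR : lam * s - Δt ^ 2 * lam - 2 ≠ 0 := by
    subst hs; nlinarith [mul_pos hlam (pow_pos hΔt 2)]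
  have hdenC : ((lam * s - Δt ^ 2 * lam - 2 : ℝ) : ℂ) ≠ 0 := by exact_mod_cast hdenR
  have hd4R : (4 + lam * Δt ^ 2 : ℝ) ≠ 0 := by positivity
  have hd4C : ((4 : ℂ) + (lam : ℂ) * (Δt : ℂ) ^ 2) ≠ 0 := by
    intro h
    apply hd4R
    have h2 : ((4 + lam * Δt ^ 2 : ℝ) : ℂ) = 0 := by push_cast; linear_combination h
    exact_mod_cast h2
  have hd4C' : ((4 : ℂ) + (Δt : ℂ) ^ 2 * (lam : ℂ)) ≠ 0 := by
    intro h; apply hd4C; linear_combination h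
  have hd4neg : ((-4 : ℂ) - (Δt : ℂ) ^ 2 * (lam : ℂ)) ≠ 0 := by
    intro h; apply hd4C; linear_combination -h
  have hsum : μp + μm = (2 * (4 - (lam : ℂ) * (Δt : ℂ) ^ 2)) / (4 + (lam : ℂ) * (Δt : ℂ) ^ 2) := by
    rw [hμp, hμm, ← add_div]; ring_nf
  have hprod : μp * μm = 1 := by
    rw [hμp, hμm, div_mul_div_comm, div_eq_one_iff_eq (mul_ne_zero hd4C hd4C)]
    linear_combination (-16 * (Δt : ℂ) ^ 2 * ((Real.sqrt lam : ℝ) : ℂ) ^ 2) * Complex.I_sq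
      + (16 * (Δt : ℂ) ^ 2) * hsqC
  have hc : ((2 + lam * s) / (lam * s - Δt ^ 2 * lam - 2) : ℝ) = -1 := by
    rw [div_eq_iff hdenR]; subst hs; ring
  have hb : ((Δt ^ 2 * lam - 4) / (lam * s - Δt ^ 2 * lam - 2) : ℝ)
      = 2 * (4 - lam * Δt ^ 2) / (4 + lam * Δt ^ 2) := by
    rw [div_eq_div_iff hdenR hd4R]; subst hs; ring
  have key : ∀ μ : ℂ, (G - μ • (1 : Matrix (Fin 2) (Fin 2) ℂ)).det = (μ - μp) * (μ - μm) := by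
    intro μ
    have expand : (μ - μp) * (μ - μm) = μ ^ 2 - (μp + μm) * μ + μp * μm := by ring
    rw [hG, hc, hb, expand, hsum, hprod]
    rw [Matrix.det_fin_two]
    simp [Matrix.smul_apply, Matrix.one_apply]
    field_simp [hd4C]
    ring
  have hp : (G - μp • (1 : Matrix (Fin 2) (Fin 2) ℂ)).det = 0 := by rw [key]; ring
  have hm : (G - μm • (1 : Matrix (Fin 2) (Fin 2) ℂ)).det = 0 := by rw [key]; ring
  have habsden : (0 : ℝ) < 4 + lam * Δt ^ 2 := by positivity
  have hxy : (4 - lam * Δt ^ 2) ^ 2 + (4 * Δt * Real.sqrt lam) ^ 2 = (4 + lam * Δt ^ 2) ^ 2 := by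
    nlinarith [hsq]
  have habsnum : ∀ y : ℝ, y ^ 2 = (4 * Δt * Real.sqrt lam) ^ 2 →
      ‖(((4 - lam * Δt ^ 2 : ℝ) : ℂ) + (y : ℝ) * I)‖ = 4 + lam * Δt ^ 2 := by
    intro y hy
    rw [Complex.norm_add_mul_I, hy, hxy, Real.sqrt_sq habsden.le]
  have hμp' : μp = (((4 - lam * Δt ^ 2 : ℝ) : ℂ) + ((4 * Δt * Real.sqrt lam : ℝ) : ℂ) * I)
      / ((4 + lam * Δt ^ 2 : ℝ) : ℂ) := by
    rw [hμp]; push_cast; ring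
  have hμm' : μm = (((4 - lam * Δt ^ 2 : ℝ) : ℂ) + ((-(4 * Δt * Real.sqrt lam) : ℝ) : ℂ) * I)
      / ((4 + lam * Δt ^ 2 : ℝ) : ℂ) := by
    rw [hμm]; push_cast; ring
  have habsp : ‖μp‖ = 1 := by
    rw [hμp', norm_div, habsnum _ rfl, Complex.norm_real, Real.norm_of_nonneg habsden.le,
      div_self habsden.ne']
  have habsm : ‖μm‖ = 1 := by
    rw [hμm', norm_div, habsnum _ (by ring), Complex.norm_real, Real.norm_of_nonneg habsden.le,
      div_self habsden.ne']
  refine ⟨hp, hm, ?_, habsp, habsm⟩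
  intro μ hμ
  rw [key] at hμ
  rcases mul_eq_zero.mp hμ with h | h
  · exact Or.inl (sub_eq_zero.mp h)
  · exact Or.inr (sub_eq_zero.mp h)
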